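/- Let G be a graph with maximum degree Δ(G) ≥ 1 and X ⊆ V(G). Then ⌈Z(G;X)/Δ(G)⌉ ≤ γ_P(G;X). -/

import Mathlib

namespace RPD

variable {V : Type*}

/-- The closed neighborhood of a set of vertices. -/
def closedNbhd (G : SimpleGraph V) (S : Set V) : Set V :=
  S ∪ {v | ∃ u ∈ S, G.Adj u v}

/-- The zero forcing closure: `ZFC G B v` means `v` eventually gets colored when
starting from the blue set `B` and repeatedly applying the color change rule
(a colored vertex with exactly one uncolored neighbor colors that neighbor). -/
inductive ZFC (G : SimpleGraph V) (B : Set V) : V → Prop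
  | init (v : V) (hv : v ∈ B) : ZFC G B v
  | force (u w : V) (hu : ZFC G B u) (hadj : G.Adj u w)
      (hothers : ∀ x, G.Adj u x → x ≠ w → ZFC G B x) : ZFC G B w

/-- `B` is a zero forcing set of `G`. -/
def IsZFS (G : SimpleGraph V) (B : Set V) : Prop := ∀ v, ZFC G B v

/-- `S` is a power dominating set of `G`: its closed neighborhood is a zero forcing set. -/
def IsPDS (G : SimpleGraph V) (S : Set V) : Prop := IsZFS G (closedNbhd G S)

/-- The restricted zero forcing number `Z(G;X)`; `Z(G) = zNum G ∅`. -/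
noncomputable def zNum (G : SimpleGraph V) (X : Set V) : ℕ :=
  sInf {n | ∃ B : Set V, X ⊆ B ∧ IsZFS G B ∧ B.ncard = n}

/-- The restricted power domination number `γ_P(G;X)`; `γ_P(G) = pdNum G ∅`. -/
noncomputable def pdNum (G : SimpleGraph V) (X : Set V) : ℕ :=
  sInf {n | ∃ S : Set V, X ⊆ S ∧ IsPDS G S ∧ S.ncard = n}

/-- A leaf is a vertex of degree one, i.e. whose neighbor set is a singleton. -/
def IsLeaf (G : SimpleGraph V) (l : V) : Prop := ∃ u, G.neighborSet l = {u}

end RPD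

open RPD

private lemma zfc_trans {V : Type*} (G : SimpleGraph V) (B B' : Set V)
    (h : ∀ b ∈ B', ZFC G B b) : ∀ v, ZFC G B' v → ZFC G B v := by
  intro v hv
  induction hv with
  | init v hv => exact h v hv
  | force u w hu hadj hothers ihu ihothers =>
    exact ZFC.force u w ihu hadj (fun x hx hxw => ihothers x hx hxw)

private lemma ncard_biUnion_le {α β : Type*} [Fintype β] {s : Set α} (hs : s.Finite)
    (f : α → Set β) (k : ℕ) (hf : ∀ a, (f a).ncard ≤ k) :
    (⋃ a ∈ s, f a).ncard ≤ k * s.ncard := by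
  refine Set.Finite.induction_on (motive := fun s _ => (⋃ a ∈ s, f a).ncard ≤ k * s.ncard) s hs (by simp) ?_
  intro a s ha hsf ih
  rw [Set.biUnion_insert, Set.ncard_insert_of_notMem ha hsf]
  calc (f a ∪ ⋃ x ∈ s, f x).ncard ≤ (f a).ncard + (⋃ x ∈ s, f x).ncard :=
          Set.ncard_union_le _ _
      _ ≤ k + k * s.ncard := Nat.add_le_add (hf a) ih
      _ = k * (s.ncard + 1) := by ring

theorem stmt17 {V : Type*} [Fintype V] (G : SimpleGraph V) [DecidableRel G.Adj]
    (hΔ : 1 ≤ G.maxDegree) (X : Set V) :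
    ⌈(zNum G X : ℚ) / (G.maxDegree : ℚ)⌉ ≤ (pdNum G X : ℤ) := by
  classical
  -- pdNum is attained
  have hne : {n | ∃ S : Set V, X ⊆ S ∧ IsPDS G S ∧ S.ncard = n}.Nonempty := by
    refine ⟨(Set.univ : Set V).ncard, Set.univ, Set.subset_univ _, ?_, rfl⟩
    intro v
    exact ZFC.init v (Or.inl (Set.mem_univ v))
  obtain ⟨S, hXS, hPDS, hScard⟩ := Nat.sInf_mem hne
  -- choice of a neighbor
  set f : V → V := fun v => if h : (G.neighborSet v).Nonempty then h.choose else v with hf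
  have hfmem : ∀ v, (G.neighborSet v).Nonempty → f v ∈ G.neighborSet v := by
    intro v h; simp only [hf, dif_pos h]; exact h.choose_spec
  set Bv : V → Set V := fun v => insert v (G.neighborSet v \ {f v}) with hBv
  set B : Set V := ⋃ v ∈ S, Bv v with hB
  have hvBv : ∀ v, v ∈ Bv v := fun v => Set.mem_insert _ _
  have hSB : ∀ v ∈ S, v ∈ B := fun v hv => Set.mem_biUnion hv (hvBv v)
  have hBvcard : ∀ v, (Bv v).ncard ≤ G.maxDegree := by
    intro v
    by_cases h : (G.neighborSet v).Nonempty
    · have hfv := hfmem v h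
      have hvn : v ∉ G.neighborSet v \ {f v} := fun hc => G.irrefl hc.1
      rw [hBv]
      rw [Set.ncard_insert_of_notMem hvn (Set.toFinite _),
        Set.ncard_diff_singleton_of_mem hfv]
      have : (G.neighborSet v).ncard = G.degree v := by
        rw [Set.ncard_eq_toFinset_card', Set.toFinset_card]
        exact G.card_neighborSet_eq_degree v
      have hd1 : 0 < (G.neighborSet v).ncard := (Set.ncard_pos (Set.toFinite _)).2 h
      have hdm := G.degree_le_maxDegree v
      omega
    · rw [Set.not_nonempty_iff_eq_empty] at h
      have : Bv v = {v} := by rw [hBv]; simp [h]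
      rw [this, Set.ncard_singleton]; exact hΔ
  have hBcard : B.ncard ≤ G.maxDegree * S.ncard :=
    ncard_biUnion_le (Set.toFinite S) Bv _ hBvcard
  have hZ1 : ∀ w ∈ closedNbhd G S, ZFC G B w := by
    rintro w (hwS | ⟨u, huS, hadj⟩)
    · exact ZFC.init w (hSB w hwS)
    · by_cases hwf : w = f u
      · refine ZFC.force u w (ZFC.init u (hSB u huS)) hadj ?_
        intro x hx hxw
        refine ZFC.init x (Set.mem_biUnion huS ?_)
        exact Set.mem_insert_of_mem _ ⟨hx, by simpa [hwf] using hxw⟩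
      · refine ZFC.init w (Set.mem_biUnion huS ?_)
        exact Set.mem_insert_of_mem _ ⟨hadj, hwf⟩
  have hZFS : IsZFS G B := fun v => zfc_trans G B _ hZ1 v (hPDS v)
  have hz : zNum G X ≤ B.ncard :=
    Nat.sInf_le ⟨B, fun x hx => hSB x (hXS hx), hZFS, rfl⟩
  have key : zNum G X ≤ G.maxDegree * pdNum G X := by
    have : pdNum G X = S.ncard := hScard.symm
    rw [this]
    exact hz.trans hBcard
  rw [Int.ceil_le]
  have hΔ0 : (0 : ℚ) < (G.maxDegree : ℚ) := by exact_mod_cast hΔ.trans_lt' Nat.zero_lt_one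
  rw [div_le_iff₀ hΔ0]
  push_cast
  calc (zNum G X : ℚ) ≤ (G.maxDegree * pdNum G X : ℕ) := by exact_mod_cast key
    _ = (pdNum G X : ℚ) * (G.maxDegree : ℚ) := by push_cast; ring
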